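/- arXiv:2109.07928 — 2 statements merged into one kernel-verified Lean document; each statement's English description precedes it below -/
import Mathlib

section
/- (Countable subadditivity of the upper expectation.) If Y^1, Y^2, … are generalized processes with Y^k_t(ω) ≥ 0 for all (t,ω) ∈ [0,∞)×Ω and all k, then Ē(Σ_{k=1}^∞ Y^k) ≤ Σ_{k=1}^∞ Ē(Y^k). -/
open MeasureTheory Filter Set
open scoped ENNReal NNReal Topology

noncomputable section

namespace ModelFreeBDG

/-- A martingale space: a filtration `F` on `Ω` (with `F 0` trivial) together with
finitely many basic continuous martingales `S j`, each adapted with all trajectories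
continuous.  Time is indexed by `ℝ≥0`. -/
structure MartingaleSpace (Ω : Type*) where
  F : ℝ≥0 → MeasurableSpace Ω
  mono : Monotone F
  F0_trivial : F 0 = ⊥
  d : ℕ
  S : Fin d → ℝ≥0 → Ω → ℝ
  S_adapted : ∀ j t, Measurable[F t] fun ω => S j t ω
  S_cont : ∀ j ω, Continuous fun t => S j t ω

variable {Ω : Type*}

/-- A stopping time w.r.t. the filtration of `M`, with values in `[0,∞]`. -/
def MartingaleSpace.IsStoppingTime (M : MartingaleSpace Ω) (τ : Ω → ℝ≥0∞) : Prop :=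
  ∀ t : ℝ≥0, MeasurableSet[M.F t] {ω | τ ω ≤ (t : ℝ≥0∞)}

/-- `g` is measurable with respect to the σ-field `F_τ` generated by the stopping time `τ`. -/
def MartingaleSpace.MeasStopped (M : MartingaleSpace Ω) (τ : Ω → ℝ≥0∞) (g : Ω → ℝ) : Prop :=
  ∀ B : Set ℝ, MeasurableSet B → ∀ t : ℝ≥0,
    MeasurableSet[M.F t] {ω | g ω ∈ B ∧ τ ω ≤ (t : ℝ≥0∞)}

/-- A proper sequence of stopping times: nondecreasing, starting from `0`, and on each path
either divergent to `+∞` or eventually constant. -/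
structure ProperSeq (M : MartingaleSpace Ω) where
  τ : ℕ → Ω → ℝ≥0∞
  stopping : ∀ n, M.IsStoppingTime (τ n)
  mono : ∀ ω, Monotone fun n => τ n ω
  zero : ∀ ω, τ 0 ω = 0
  proper : ∀ ω, Tendsto (fun n => τ n ω) atTop (𝓝 ⊤) ∨ ∃ n, ∀ m, n ≤ m → τ m ω = τ n ω

/-- A simple trading strategy. -/
structure SimpleStrategy (M : MartingaleSpace Ω) where
  c : ℝ
  τ : ProperSeq M
  g : ℕ → Ω → ℝ
  g_bdd : ∀ n, ∃ C : ℝ, ∀ ω, |g n ω| ≤ C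
  g_meas : ∀ n, M.MeasStopped (τ.τ n) (g n)
  g_top : ∀ n ω, τ.τ n ω = ⊤ → g n ω = 0

/-- `τ(ω) ∧ t`, as an element of `ℝ≥0`. -/
def stopMin (τ : Ω → ℝ≥0∞) (t : ℝ≥0) (ω : Ω) : ℝ≥0 :=
  (min (τ ω) (t : ℝ≥0∞)).toNNReal

/-- The simple integral `(G·X)_t = c + Σ_{n≥1} g_{n-1}(X_{τ_n∧t} - X_{τ_{n-1}∧t})` for a
real process `X`. -/
def SimpleStrategy.integral {M : MartingaleSpace Ω} (G : SimpleStrategy M)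
    (X : ℝ≥0 → Ω → ℝ) (t : ℝ≥0) (ω : Ω) : ℝ :=
  G.c + ∑' n : ℕ,
    G.g n ω * (X (stopMin (G.τ.τ (n + 1)) t ω) ω - X (stopMin (G.τ.τ n) t ω) ω)

/-- A simple capital process: a finite sum `Σ_{j} (G^j · S^j)` over simple trading strategies. -/
def IsSimpleCapital (M : MartingaleSpace Ω) (X : ℝ≥0 → Ω → ℝ) : Prop :=
  ∃ G : Fin M.d → SimpleStrategy M, ∀ t ω, X t ω = ∑ j, (G j).integral (M.S j) t ω

/-- The class `𝓒` of nonnegative supermartingales: the smallest class of `[-∞,∞]`-valued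
processes containing all nonnegative simple capital processes, closed under adding a simple
capital process whenever the sum stays nonnegative, and closed under pointwise `liminf`. -/
inductive IsNonnegSupermart (M : MartingaleSpace Ω) : (ℝ≥0 → Ω → EReal) → Prop
  | simple (X : ℝ≥0 → Ω → ℝ) (hX : IsSimpleCapital M X) (hpos : ∀ t ω, 0 ≤ X t ω) :
      IsNonnegSupermart M fun t ω => (X t ω : EReal)
  | add (X : ℝ≥0 → Ω → EReal) (Y : ℝ≥0 → Ω → ℝ) (hX : IsNonnegSupermart M X)
      (hY : IsSimpleCapital M Y) (hpos : ∀ t ω, 0 ≤ X t ω + (Y t ω : EReal)) :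
      IsNonnegSupermart M fun t ω => X t ω + (Y t ω : EReal)
  | liminf (Xs : ℕ → ℝ≥0 → Ω → EReal) (hXs : ∀ n, IsNonnegSupermart M (Xs n)) :
      IsNonnegSupermart M fun t ω => Filter.liminf (fun n => Xs n t ω) atTop

/-- The upper expectation `Ē Y` of a generalized process `Y`: the infimum of the (deterministic)
initial values of nonnegative supermartingales dominating `Y`. -/
def upperExp (M : MartingaleSpace Ω) (Y : ℝ≥0 → Ω → EReal) : EReal :=
  sInf {x : EReal | ∃ X, IsNonnegSupermart M X ∧ (∀ ω, X 0 ω = x) ∧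
    ∀ t ω, Y t ω ≤ X t ω}

/-- The outer measure `P̄ A := Ē 1_A` of a set of pairs `(t, ω)`. -/
def upperProb (M : MartingaleSpace Ω) (A : Set (ℝ≥0 × Ω)) : EReal :=
  upperExp M fun t ω => A.indicator (fun _ => (1 : EReal)) (t, ω)

/-- A set `E ⊆ [0,∞) × Ω` is instantly enforceable if some nonnegative supermartingale with
initial value `1` becomes `+∞` outside of `E`. -/
def InstantlyEnforceable (M : MartingaleSpace Ω) (E : Set (ℝ≥0 × Ω)) : Prop :=
  ∃ X, IsNonnegSupermart M X ∧ (∀ ω, X 0 ω = 1) ∧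
    ∀ t ω, (t, ω) ∉ E → X t ω = ⊤

/-- A set is instantly blockable iff its complement is instantly enforceable. -/
def InstantlyBlockable (M : MartingaleSpace Ω) (B : Set (ℝ≥0 × Ω)) : Prop :=
  InstantlyEnforceable M Bᶜ

/-- Assumption A: for any `t ≥ 0` and any instantly blockable set `B`, the projection of
`B ∩ ([0,t] × Ω)` onto `Ω` belongs to `F t`. -/
def AssumptionA (M : MartingaleSpace Ω) : Prop :=
  ∀ (t : ℝ≥0) (B : Set (ℝ≥0 × Ω)), InstantlyBlockable M B →
    MeasurableSet[M.F t] {ω | ∃ s : ℝ≥0, s ≤ t ∧ (s, ω) ∈ B}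

/-- The values of `X` are real w.i.e. -/
def RealWIE (M : MartingaleSpace Ω) (X : ℝ≥0 → Ω → EReal) : Prop :=
  InstantlyEnforceable M {p : ℝ≥0 × Ω | ∃ r : ℝ, X p.1 p.2 = (r : EReal)}

/-- The set of `(t,ω)` where `sup_{s ∈ [0,t]} |X_s(ω) - X^n_s(ω)| → 0` as `n → ∞`. -/
def unifConvSet (Xn : ℕ → ℝ≥0 → Ω → EReal) (X : ℝ≥0 → Ω → EReal) : Set (ℝ≥0 × Ω) :=
  {p | Tendsto (fun n => ⨆ s ∈ Icc (0 : ℝ≥0) p.1, (X s p.2 - Xn n s p.2).abs)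
    atTop (𝓝 (0 : ℝ≥0∞))}

/-- The class `𝓜` of martingales: the smallest class of adapted, real w.i.e. processes
containing all simple capital processes and closed under locally uniform limits w.i.e. -/
inductive IsMartingale (M : MartingaleSpace Ω) : (ℝ≥0 → Ω → EReal) → Prop
  | simple (X : ℝ≥0 → Ω → ℝ) (hX : IsSimpleCapital M X) :
      IsMartingale M fun t ω => (X t ω : EReal)
  | lim (Xn : ℕ → ℝ≥0 → Ω → EReal) (X : ℝ≥0 → Ω → EReal)
      (hXn : ∀ n, IsMartingale M (Xn n))
      (hadapted : ∀ t, Measurable[M.F t] (X t))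
      (hreal : RealWIE M X)
      (hconv : InstantlyEnforceable M (unifConvSet Xn X)) :
      IsMartingale M X

/-- `X_{τ ∧ t}(ω)`. -/
def stopVal (X : ℝ≥0 → Ω → EReal) (τ : Ω → ℝ≥0∞) (t : ℝ≥0) (ω : Ω) : EReal :=
  X (stopMin τ t ω) ω

/-- The simple quadratic variation `[X]^τ_t := Σ_{n≥1} (X_{τ_n∧t} - X_{τ_{n-1}∧t})²`,
as an element of `[0,∞]`. -/
def sqVarAlong (X : ℝ≥0 → Ω → EReal) (τ : ℕ → Ω → ℝ≥0∞) (t : ℝ≥0) (ω : Ω) : ℝ≥0∞ :=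
  ∑' n : ℕ, ((stopVal X (τ (n + 1)) t ω - stopVal X (τ n) t ω) ^ 2).abs

/-- `Y^{τ,*}_t := sup_n |Y_{τ_n ∧ t}|`, as an element of `[0,∞]`. -/
def supAlong (Y : ℝ≥0 → Ω → EReal) (τ : ℕ → Ω → ℝ≥0∞) (t : ℝ≥0) (ω : Ω) : ℝ≥0∞ :=
  ⨆ n : ℕ, (stopVal Y (τ n) t ω).abs

/-- The supremum process `Y^*_t := sup_{0 ≤ s ≤ t} |Y_s|`, as an element of `[0,∞]`. -/
def supProc (Y : ℝ≥0 → Ω → EReal) (t : ℝ≥0) (ω : Ω) : ℝ≥0∞ :=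
  ⨆ s ∈ Icc (0 : ℝ≥0) t, (Y s ω).abs

/-- The hitting time `σ(X,c) := inf {t ≥ 0 : |X_t| ≥ c}`. -/
def hitting (X : ℝ≥0 → Ω → EReal) (c : ℝ) (ω : Ω) : ℝ≥0∞ :=
  ⨅ t ∈ {t : ℝ≥0 | ENNReal.ofReal c ≤ (X t ω).abs}, (t : ℝ≥0∞)

/-- The oscillation of the trajectory of `X` on `[a,b]`. -/
def oscOn (X : ℝ≥0 → Ω → EReal) (a b : ℝ≥0) (ω : Ω) : EReal :=
  (⨆ s ∈ Icc a b, X s ω) - ⨅ s ∈ Icc a b, X s ω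

/-- The set of `(t,ω)` on which the sequence `σ` finely covers `X` with accuracy `δ`:
only finitely many `σ_n(ω) ≤ t`, and the oscillation of `X(ω)` on each interval
`[σ_n(ω)∧t, σ_{n+1}(ω)∧t]` is at most `δ`. -/
def fineCoverSet (σ : ℕ → Ω → ℝ≥0∞) (X : ℝ≥0 → Ω → EReal) (δ : ℝ) : Set (ℝ≥0 × Ω) :=
  {p | {n : ℕ | σ n p.2 ≤ (p.1 : ℝ≥0∞)}.Finite ∧
    ∀ n, oscOn X (stopMin (σ n) p.1 p.2) (stopMin (σ (n + 1)) p.1 p.2) p.2 ≤ (δ : EReal)}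

/-- `σ` is a fine cover of `X` with accuracy `δ` on the set `E`. -/
def FinelyCoversOn (M : MartingaleSpace Ω) (σ : ℕ → Ω → ℝ≥0∞) (X : ℝ≥0 → Ω → EReal)
    (δ : ℝ) (E : Set (ℝ≥0 × Ω)) : Prop :=
  (∀ n, M.IsStoppingTime (σ n)) ∧ (∀ ω, Monotone fun n => σ n ω) ∧ (∀ ω, σ 0 ω = 0) ∧
    E ⊆ fineCoverSet σ X δ

/-- `σ` is a fine cover of `X` with accuracy `δ` w.i.e. -/
def ProperSeq.FinelyCoversWIE {M : MartingaleSpace Ω} (σ : ProperSeq M)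
    (X : ℝ≥0 → Ω → EReal) (δ : ℝ) : Prop :=
  InstantlyEnforceable M (fineCoverSet σ.τ X δ)

/-- The set of `(t,ω)` on which `sup_{s ∈ [0, σ(ω) ∧ t]} |Y^m_s(ω) - Y_s(ω)| → 0`, i.e.
locally uniform convergence on the random interval `[0,σ]∖{+∞}`. -/
def convWithinSet (Ym : ℕ → ℝ≥0 → Ω → EReal) (Y : ℝ≥0 → Ω → EReal) (σ : Ω → ℝ≥0∞) :
    Set (ℝ≥0 × Ω) :=
  {p | Tendsto (fun m => ⨆ s ∈ Icc (0 : ℝ≥0) (stopMin σ p.1 p.2),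
    (Ym m s p.2 - Y s p.2).abs) atTop (𝓝 (0 : ℝ≥0∞))}

/-- The set of `(t,ω)` on which `sup_{s ∈ [0,t]} |Y^m_s(ω) - Y_s(ω)| → 0`, i.e. locally
uniform convergence. -/
def locUnifConvSet (Ym : ℕ → ℝ≥0 → Ω → EReal) (Y : ℝ≥0 → Ω → EReal) : Set (ℝ≥0 × Ω) :=
  {p | Tendsto (fun m => ⨆ s ∈ Icc (0 : ℝ≥0) p.1, (Ym m s p.2 - Y s p.2).abs)
    atTop (𝓝 (0 : ℝ≥0∞))}

/-- `Q` is a quadratic variation of `X`: a real continuous adapted process such that, for every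
summable sequence of positive accuracies `δ_m` and every sequence of proper sequences of
stopping times `σ^m` finely covering `X` with accuracy `δ_m` w.i.e., and every `c > 0`, the
simple quadratic variations `[X]^{σ^m}` converge locally uniformly on `[0, σ(X,c)]∖{+∞}`
w.i.e. to `Q`. -/
structure IsQuadVar (M : MartingaleSpace Ω) (X : ℝ≥0 → Ω → EReal) (Q : ℝ≥0 → Ω → ℝ) :
    Prop where
  adapted : ∀ t, Measurable[M.F t] (Q t)
  cont : ∀ ω, Continuous fun t => Q t ω
  conv : ∀ δ : ℕ → ℝ, (∀ m, 0 < δ m) → Summable δ →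
    ∀ σ : ℕ → ProperSeq M, (∀ m, (σ m).FinelyCoversWIE X (δ m)) →
    ∀ c : ℝ, 0 < c →
      InstantlyEnforceable M (convWithinSet
        (fun m t ω => ((sqVarAlong X (σ m).τ t ω : ℝ≥0∞) : EReal))
        (fun t ω => ((Q t ω : ℝ) : EReal)) (hitting X c))

open Classical in
/-- The Lebesgue–Stieltjes measure on `ℝ` associated with a monotone continuous function
(and the zero measure otherwise). -/
def lsMeasure (a : ℝ → ℝ) : Measure ℝ :=
  if h : Monotone a ∧ Continuous a then
    StieltjesFunction.measure ⟨a, h.1, fun _ => h.2.continuousWithinAt⟩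
  else 0

/-- The pathwise Lebesgue–Stieltjes integral `∫_0^t g dа` for functions on `ℝ≥0`. -/
def lsInt (g : ℝ≥0 → ℝ) (a : ℝ≥0 → ℝ) (t : ℝ≥0) : ℝ :=
  ∫ s in Ioc (0 : ℝ) (t : ℝ), g s.toNNReal ∂(lsMeasure fun s => a s.toNNReal)

/-- The pathwise Lebesgue–Stieltjes integral `∫_0^t g d(¼ Qp − ¼ Qm)`, i.e. the integral
with respect to a quadratic covariation `[X,Y] = ¼[X+Y] − ¼[X−Y]`. -/
def covIntegral (g : ℝ≥0 → ℝ) (Qp Qm : ℝ≥0 → ℝ) (t : ℝ≥0) : ℝ :=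
  (1 / 4 : ℝ) * lsInt g Qp t - (1 / 4 : ℝ) * lsInt g Qm t

/-- The step process associated with a simple trading strategy:
`G_t = Σ_{n≥1} g_{n-1} 1_{[τ_{n-1}, τ_n)}(t)`. -/
def SimpleStrategy.step {M : MartingaleSpace Ω} (G : SimpleStrategy M) (t : ℝ≥0) (ω : Ω) :
    ℝ :=
  ∑' n : ℕ, ({t' : ℝ≥0 | G.τ.τ n ω ≤ (t' : ℝ≥0∞) ∧ (t' : ℝ≥0∞) < G.τ.τ (n + 1) ω}).indicator
    (fun _ => G.g n ω) t

/-- The simple integral `(G·X)` of a simple trading strategy against an `EReal`-valued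
process. -/
def SimpleStrategy.integralE {M : MartingaleSpace Ω} (G : SimpleStrategy M)
    (X : ℝ≥0 → Ω → EReal) (t : ℝ≥0) (ω : Ω) : EReal :=
  (G.c : EReal) + ∑' n : ℕ,
    (G.g n ω : EReal) * (stopVal X (G.τ.τ (n + 1)) t ω - stopVal X (G.τ.τ n) t ω)

/-- Membership in the space `𝓡` of generalized processes whose trajectories are Borel
measurable and real on every interval `[0,t]` w.i.e. -/
def MemR (M : MartingaleSpace Ω) (G : ℝ≥0 → Ω → EReal) : Prop :=
  InstantlyEnforceable M {p : ℝ≥0 × Ω |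
    (∀ s ∈ Icc (0 : ℝ≥0) p.1, ∃ r : ℝ, G s p.2 = (r : EReal)) ∧
    Measurable ((Icc (0 : ℝ≥0) p.1).restrict fun s => G s p.2)}

/-- The pseudo-distance `d_{∞,X,loc}(Y,Z) := Σ_{N≥1} 2^{-N} Ē((Y−Z)^*_{·∧σ(X,N)})`. -/
def dInfLoc (M : MartingaleSpace Ω) (X : ℝ≥0 → Ω → EReal) (Y Z : ℝ≥0 → Ω → EReal) :
    EReal :=
  ∑' N : ℕ, (((1 / 2 : ℝ) ^ (N + 1) : ℝ) : EReal) *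
    upperExp M (fun t ω =>
      ((⨆ s ∈ Icc (0 : ℝ≥0) (stopMin (hitting X ((N : ℝ) + 1)) t ω),
        (Y s ω - Z s ω).abs : ℝ≥0∞) : EReal))

/-- The approximating stopping times `τ^m_n` for a càdlàg integrand `G`:
`τ^m_0 = 0`, `τ^m_{n+1} = inf{t > τ^m_n : |G_t − G_{τ^m_n}| ≥ 2^{-m}}`. -/
def approxTimes (G : ℝ≥0 → Ω → ℝ) (m : ℕ) : ℕ → Ω → ℝ≥0∞
  | 0 => fun _ => 0
  | n + 1 => fun ω =>
      ⨅ t ∈ {t : ℝ≥0 | approxTimes G m n ω < (t : ℝ≥0∞) ∧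
        ((2 : ℝ) ^ m)⁻¹ ≤ |G t ω - G ((approxTimes G m n ω).toNNReal) ω|}, (t : ℝ≥0∞)

/-- The approximating simple integral `(G^m · X)` where
`G^m_t = Σ_{n≥1} G_{τ^m_{n-1}} 1_{[τ^m_{n-1}, τ^m_n)}(t)`. -/
def approxInt (G : ℝ≥0 → Ω → ℝ) (X : ℝ≥0 → Ω → EReal) (m : ℕ) (t : ℝ≥0) (ω : Ω) :
    EReal :=
  ∑' n : ℕ, ((G ((approxTimes G m n ω).toNNReal) ω : ℝ) : EReal) *
    (stopVal X (approxTimes G m (n + 1)) t ω - stopVal X (approxTimes G m n) t ω)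

/-- `I` is a model-free integral `G·X`: a representative of the `d_{∞,X,loc}`-limit of the
classes of the approximating simple integrals `G^m·X`. -/
def IsModelFreeIntegral (M : MartingaleSpace Ω) (X : ℝ≥0 → Ω → EReal) (G : ℝ≥0 → Ω → ℝ)
    (I : ℝ≥0 → Ω → EReal) : Prop :=
  Tendsto (fun m => dInfLoc M X (approxInt G X m) I) atTop (𝓝 (0 : EReal))

/-- The filtration of `M` is right-continuous. -/
def RightContinuousFiltration (M : MartingaleSpace Ω) : Prop :=
  ∀ t : ℝ≥0, M.F t = ⨅ (s : ℝ≥0) (_ : t < s), M.F s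

/-- A càdlàg function on `ℝ≥0`. -/
def IsCadlag (f : ℝ≥0 → ℝ) : Prop :=
  (∀ t, ContinuousWithinAt f (Ici t) t) ∧
    ∀ t : ℝ≥0, 0 < t → ∃ l : ℝ, Tendsto f (𝓝[<] t) (𝓝 l)

/-- The truncated variation `TV^c(x,[0,t])` of a function `x : ℝ≥0 → ℝ`. -/
def truncVar (x : ℝ≥0 → ℝ) (c : ℝ) (t : ℝ≥0) : ℝ≥0∞ :=
  ⨆ (n : ℕ) (u : Fin (n + 1) → ℝ≥0) (_ : Monotone u) (_ : ∀ i, u i ≤ t),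
    ∑ i : Fin n, ENNReal.ofReal (|x (u i.succ) - x (u i.castSucc)| - c)


-- Auxiliary lemmas to insert above the theorem

namespace Subadd

/-- Addition of a real constant on the right, as an order isomorphism of `EReal`. -/
def addRightIso (r : ℝ) : EReal ≃o EReal where
  toFun x := x + (r : EReal)
  invFun x := x - (r : EReal)
  left_inv _ := EReal.add_sub_cancel_right
  right_inv _ := EReal.sub_add_cancel
  map_rel_iff' := (EReal.addLECancellable_coe r).add_le_add_iff_right

lemma liminf_add_const (u : ℕ → EReal) (hu : ∀ n, 0 ≤ u n) (c : EReal) (hc : 0 ≤ c) :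
    Filter.liminf (fun n => u n + c) atTop = Filter.liminf u atTop + c := by
  have hlb : 0 ≤ Filter.liminf u atTop :=
    Filter.le_liminf_of_le (by isBoundedDefault) (Filter.Eventually.of_forall hu)
  induction c with
  | bot => exact absurd hc (by simp)
  | coe r => exact ((addRightIso r).liminf_apply (u := u) (f := atTop)).symm
  | top =>
    have h1 : ∀ n, u n + (⊤ : EReal) = ⊤ := fun n =>
      EReal.add_top_of_ne_bot (EReal.bot_lt_zero.trans_le (hu n)).ne'
    simp only [h1]
    rw [Filter.liminf_const (⊤ : EReal),
      EReal.add_top_of_ne_bot (EReal.bot_lt_zero.trans_le hlb).ne']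

lemma ereal_hasSum_of_nonneg (f : ℕ → EReal) (hf : ∀ n, 0 ≤ f n) :
    HasSum f (⨆ s : Finset ℕ, ∑ i ∈ s, f i) :=
  tendsto_atTop_iSup fun _ _ hst =>
    Finset.sum_le_sum_of_subset_of_nonneg hst fun i _ _ => hf i

lemma ereal_le_of_forall_add_eps (a b : EReal) (h : ∀ ε : ℝ, 0 < ε → a ≤ b + (ε : EReal)) :
    a ≤ b := by
  by_contra hab
  push_neg at hab
  induction b with
  | bot =>
    have h1 := h 1 one_pos
    rw [show ((1 : ℝ) : EReal) = (1 : EReal) by norm_cast, EReal.bot_add] at h1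
    exact absurd (hab.trans_le h1) (lt_irrefl _)
  | coe r =>
    rcases EReal.lt_iff_exists_real_btwn.1 hab with ⟨c, hbc, hca⟩
    have hrc : r < c := EReal.coe_lt_coe_iff.1 hbc
    have h2 := h (c - r) (by linarith)
    rw [show ((r : ℝ) : EReal) + ((c - r : ℝ) : EReal) = ((c : ℝ) : EReal) by
      norm_cast; ring] at h2
    exact absurd (h2.trans_lt hca) (lt_irrefl _)
  | top => exact absurd hab (not_lt.2 le_top)

end Subadd

namespace ModelFreeBDGAux

variable {Ω : Type*}

lemma nonneg_of_mem {M : MartingaleSpace Ω} {X : ℝ≥0 → Ω → EReal}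
    (hX : IsNonnegSupermart M X) : ∀ t ω, 0 ≤ X t ω := by
  induction hX with
  | simple X₀ hX₀ hpos => exact fun t ω => EReal.coe_nonneg.2 (hpos t ω)
  | add X' Z hX' hZ hpos ih => exact hpos
  | liminf Xs hXs ih =>
    exact fun t ω =>
      Filter.le_liminf_of_le (by isBoundedDefault)
        (Filter.Eventually.of_forall fun n => ih n t ω)

/-- The trivial proper sequence of stopping times: identically `0`. -/
def trivialSeq (M : MartingaleSpace Ω) : ProperSeq M where
  τ := fun _ _ => 0
  stopping := fun n t => by
    have : {ω : Ω | (0 : ℝ≥0∞) ≤ (t : ℝ≥0∞)} = Set.univ := by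
      ext ω; simp
    rw [this]; exact MeasurableSet.univ
  mono := fun ω => monotone_const
  zero := fun ω => rfl
  proper := fun ω => Or.inr ⟨0, fun m _ => rfl⟩

/-- The zero simple trading strategy. -/
def zeroStrategy (M : MartingaleSpace Ω) : SimpleStrategy M where
  c := 0
  τ := trivialSeq M
  g := fun _ _ => 0
  g_bdd := fun n => ⟨0, fun ω => by simp⟩
  g_meas := fun n B hB t => by
    by_cases h0 : (0 : ℝ) ∈ B
    · have : {ω : Ω | (0 : ℝ) ∈ B ∧ ((trivialSeq M).τ n ω) ≤ (t : ℝ≥0∞)} = Set.univ := by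
        ext ω; simp [trivialSeq, h0]
      rw [this]; exact @MeasurableSet.univ _ (M.F t)
    · have : {ω : Ω | (0 : ℝ) ∈ B ∧ ((trivialSeq M).τ n ω) ≤ (t : ℝ≥0∞)} = ∅ := by
        ext ω; simp [trivialSeq, h0]
      rw [this]; exact @MeasurableSet.empty _ (M.F t)
  g_top := fun n ω _ => rfl

lemma isSimpleCapital_zero (M : MartingaleSpace Ω) :
    IsSimpleCapital M (fun _ _ => (0 : ℝ)) := by
  refine ⟨fun _ => zeroStrategy M, fun t ω => ?_⟩
  simp [SimpleStrategy.integral, zeroStrategy]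

lemma zero_mem (M : MartingaleSpace Ω) :
    IsNonnegSupermart M (fun _ _ => (0 : EReal)) := by
  have h := IsNonnegSupermart.simple (M := M) (fun _ _ => (0 : ℝ))
    (isSimpleCapital_zero M) (fun _ _ => le_rfl)
  simpa using h

lemma add_mem {M : MartingaleSpace Ω} {X Y : ℝ≥0 → Ω → EReal}
    (hX : IsNonnegSupermart M X) (hY : IsNonnegSupermart M Y) :
    IsNonnegSupermart M (fun t ω => X t ω + Y t ω) := by
  induction hX with
  | simple X₀ hX₀ hpos =>
    have h := IsNonnegSupermart.add Y X₀ hY hX₀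
      (fun t ω => add_nonneg (nonneg_of_mem hY t ω) (EReal.coe_nonneg.2 (hpos t ω)))
    have heq : (fun t ω => ((X₀ t ω : EReal)) + Y t ω)
        = fun t ω => Y t ω + (X₀ t ω : EReal) := by
      funext t ω; exact add_comm _ _
    rw [heq]; exact h
  | add X' Z hX' hZ hpos ih =>
    have h := IsNonnegSupermart.add _ Z ih hZ
      (fun t ω => by
        have h2 := add_nonneg (hpos t ω) (nonneg_of_mem hY t ω)
        rwa [add_right_comm] at h2)
    have heq : (fun t ω => (X' t ω + (Z t ω : EReal)) + Y t ω)
        = fun t ω => (X' t ω + Y t ω) + (Z t ω : EReal) := by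
      funext t ω; exact add_right_comm _ _ _
    rw [heq]; exact h
  | liminf Xs hXs ih =>
    have h := IsNonnegSupermart.liminf (fun n t ω => Xs n t ω + Y t ω) ih
    have heq : (fun t ω => Filter.liminf (fun n => Xs n t ω) atTop + Y t ω)
        = fun t ω => Filter.liminf (fun n => Xs n t ω + Y t ω) atTop := by
      funext t ω
      exact (Subadd.liminf_add_const (fun n => Xs n t ω)
        (fun n => nonneg_of_mem (hXs n) t ω) (Y t ω) (nonneg_of_mem hY t ω)).symm
    rw [heq]; exact h

lemma sum_mem {M : MartingaleSpace Ω} (X : ℕ → ℝ≥0 → Ω → EReal)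
    (hX : ∀ k, IsNonnegSupermart M (X k)) (n : ℕ) :
    IsNonnegSupermart M (fun t ω => ∑ k ∈ Finset.range n, X k t ω) := by
  induction n with
  | zero => simpa using zero_mem M
  | succ n ih =>
    have h := add_mem ih (hX n)
    have heq : (fun t ω => ∑ k ∈ Finset.range (n + 1), X k t ω)
        = fun t ω => (∑ k ∈ Finset.range n, X k t ω) + X n t ω := by
      funext t ω; exact Finset.sum_range_succ _ _
    rw [heq]; exact h

end ModelFreeBDGAux

/-- Countable subadditivity of the upper expectation for nonnegative
generalized processes. -/
theorem upperExp_countable_subadditive (M : MartingaleSpace Ω)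
    (Y : ℕ → ℝ≥0 → Ω → EReal) (hY : ∀ k t ω, 0 ≤ Y k t ω) :
    upperExp M (fun t ω => ∑' k : ℕ, Y k t ω) ≤ ∑' k : ℕ, upperExp M (Y k) := by
  classical
  open ModelFreeBDGAux in
  rcases isEmpty_or_nonempty Ω with hΩ | hΩ
  · exact sInf_le ⟨fun _ _ => 0, zero_mem M, fun ω => (IsEmpty.false ω).elim,
      fun t ω => (IsEmpty.false ω).elim⟩
  -- upper expectations are nonnegative
  have hEnn : ∀ k, 0 ≤ upperExp M (Y k) := by
    intro k
    refine le_sInf fun x hx => ?_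
    obtain ⟨X, hX, h0, _⟩ := hx
    obtain ⟨ω⟩ := hΩ
    rw [← h0 ω]
    exact nonneg_of_mem hX 0 ω
  have hsumE := Subadd.ereal_hasSum_of_nonneg (fun k => upperExp M (Y k)) hEnn
  by_cases htop : ∃ k, upperExp M (Y k) = ⊤
  · obtain ⟨k, hk⟩ := htop
    have h1 : (⊤ : EReal) ≤ ∑' k, upperExp M (Y k) := by
      rw [hsumE.tsum_eq]
      refine le_trans ?_ (le_iSup (fun s : Finset ℕ => ∑ i ∈ s, upperExp M (Y i)) {k})
      simp [hk]
    exact le_trans le_top h1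
  push_neg at htop
  refine Subadd.ereal_le_of_forall_add_eps _ _ fun ε hε => ?_
  -- choose near-optimal supermartingales
  have hch : ∀ k, ∃ x, (∃ X, IsNonnegSupermart M X ∧ (∀ ω, X 0 ω = x) ∧
      ∀ t ω, Y k t ω ≤ X t ω) ∧ x < upperExp M (Y k) + ((ε * (1 / 2) ^ (k + 1) : ℝ) : EReal) := by
    intro k
    have hklt : upperExp M (Y k) < upperExp M (Y k) + ((ε * (1 / 2) ^ (k + 1) : ℝ) : EReal) := by
      have hne : upperExp M (Y k) ≠ ⊥ :=
        (EReal.bot_lt_zero.trans_le (hEnn k)).ne'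
      rw [← EReal.coe_toReal (htop k) hne]
      have : (0 : ℝ) < ε * (1 / 2) ^ (k + 1) := by positivity
      norm_cast
      linarith
    have := sInf_lt_iff.1 hklt
    obtain ⟨x, hx, hxlt⟩ := this
    exact ⟨x, hx, hxlt⟩
  choose x hxmem hxlt using hch
  choose X hXmem h0 hdom using hxmem
  -- the dominating supermartingale: liminf of partial sums
  have hP : IsNonnegSupermart M
      (fun t ω => Filter.liminf (fun n => ∑ k ∈ Finset.range n, X k t ω) atTop) :=
    IsNonnegSupermart.liminf (fun n t ω => ∑ k ∈ Finset.range n, X k t ω)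
      (fun n => sum_mem X hXmem n)
  set x0 : EReal := Filter.liminf (fun n => ∑ k ∈ Finset.range n, x k) atTop with hx0def
  have hP0 : ∀ ω, Filter.liminf (fun n => ∑ k ∈ Finset.range n, X k 0 ω) atTop = x0 := by
    intro ω
    have heq : (fun n => ∑ k ∈ Finset.range n, X k 0 ω)
        = fun n => ∑ k ∈ Finset.range n, x k := by
      funext n; exact Finset.sum_congr rfl fun k _ => h0 k ω
    rw [heq]
  have hdomP : ∀ t ω, (∑' k, Y k t ω) ≤
      Filter.liminf (fun n => ∑ k ∈ Finset.range n, X k t ω) atTop := by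
    intro t ω
    rw [(Subadd.ereal_hasSum_of_nonneg (fun k => Y k t ω) (fun k => hY k t ω)).tsum_eq]
    refine iSup_le fun s => ?_
    obtain ⟨n, hs⟩ := s.exists_nat_subset_range
    calc ∑ i ∈ s, Y i t ω
        ≤ ∑ k ∈ Finset.range n, Y k t ω :=
          Finset.sum_le_sum_of_subset_of_nonneg hs fun i _ _ => hY i t ω
      _ ≤ ∑ k ∈ Finset.range n, X k t ω :=
          Finset.sum_le_sum fun k _ => hdom k t ω
      _ ≤ Filter.liminf (fun m => ∑ k ∈ Finset.range m, X k t ω) atTop := by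
          refine Filter.le_liminf_of_le (by isBoundedDefault) ?_
          filter_upwards [Filter.eventually_ge_atTop n] with m hm
          exact Finset.sum_le_sum_of_subset_of_nonneg
            (Finset.range_subset_range.2 hm) fun k _ _ => nonneg_of_mem (hXmem k) t ω
  have hLHS : upperExp M (fun t ω => ∑' k, Y k t ω) ≤ x0 :=
    sInf_le ⟨_, hP, hP0, hdomP⟩
  refine hLHS.trans ?_
  -- bound x0
  have hbound : ∀ n, (∑ k ∈ Finset.range n, x k) ≤
      (∑' k, upperExp M (Y k)) + (ε : EReal) := by
    intro n
    have h2 : ∑ k ∈ Finset.range n, ((ε * (1 / 2) ^ (k + 1) : ℝ) : EReal) ≤ (ε : EReal) := by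
      have hreal : ∑ k ∈ Finset.range n, (ε * (1 / 2) ^ (k + 1) : ℝ) ≤ ε := by
        have hgeom := sum_geometric_two_le n
        have heq : ∀ k, (ε * (1 / 2) ^ (k + 1) : ℝ) = (ε / 2) * (1 / 2) ^ k := fun k => by
          ring
        rw [Finset.sum_congr rfl fun k _ => heq k, ← Finset.mul_sum]
        nlinarith
      have hcoe : ∀ m : ℕ, ∑ k ∈ Finset.range m, ((ε * (1 / 2) ^ (k + 1) : ℝ) : EReal)
          = ((∑ k ∈ Finset.range m, (ε * (1 / 2) ^ (k + 1) : ℝ) : ℝ) : EReal) := by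
        intro m
        induction m with
        | zero => simp
        | succ m ihm => rw [Finset.sum_range_succ, Finset.sum_range_succ, ihm,
            ← EReal.coe_add]
      rw [hcoe n]
      exact EReal.coe_le_coe_iff.2 hreal
    calc ∑ k ∈ Finset.range n, x k
        ≤ ∑ k ∈ Finset.range n,
            (upperExp M (Y k) + ((ε * (1 / 2) ^ (k + 1) : ℝ) : EReal)) :=
          Finset.sum_le_sum fun k _ => (hxlt k).le
      _ = (∑ k ∈ Finset.range n, upperExp M (Y k))
            + ∑ k ∈ Finset.range n, ((ε * (1 / 2) ^ (k + 1) : ℝ) : EReal) :=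
          Finset.sum_add_distrib
      _ ≤ (∑' k, upperExp M (Y k)) + (ε : EReal) := by
          refine add_le_add ?_ h2
          rw [hsumE.tsum_eq]
          exact le_iSup (fun s : Finset ℕ => ∑ i ∈ s, upperExp M (Y i)) (Finset.range n)
  rw [hx0def, Filter.liminf_eq_iSup_iInf_of_nat]
  refine iSup_le fun n => ?_
  exact le_trans (iInf₂_le n le_rfl) (hbound n)

end ModelFreeBDG
end
end

section
/- Let X be a martingale, σ = (σ_n) a fine cover of X with accuracy δ > 0 on a set E ⊆ [0,∞)×Ω, and τ = (τ_n) a sequence of 𝔽-stopping times such that for any (t,ω) ∈ E only finitely many n satisfy τ_n(ω) ≤ t. Let υ = (υ_n) be the non-decreasing rearrangement of the stopping times from both sequences σ and τ with redundancies deleted. Then for all (t,ω) ∈ E, [[X]^σ − [X]^υ]^υ_t ≤ 4δ² [X]^υ_t, where for a process Z the quantity [Z]^υ_t := Σ_{n≥1}(Z_{υ_n∧t} − Z_{υ_{n−1}∧t})². -/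
open MeasureTheory Filter Set
open scoped ENNReal NNReal Topology

noncomputable section

namespace ModelFreeBDG

variable {Ω : Type*}

section AuxiliaryForStatement10

private lemma real_of_abs_sq_ne_top' {u v : EReal} (h : ((u - v)^2).abs ≠ ⊤) :
    (∃ r:ℝ, u = r) ∧ (∃ s:ℝ, v = s) := by
  rw [sq, EReal.abs_mul] at h
  have hd : u - v ≠ ⊤ ∧ u - v ≠ ⊥ := by
    constructor <;> intro hh <;> rw [hh] at h <;> simp at h
  induction u <;> induction v <;> simp_all [sub_eq_add_neg]

private lemma abs_sq_coe' (r s : ℝ) :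
    (((r:EReal) - (s:EReal))^2).abs = ENNReal.ofReal ((r - s)^2) := by
  rw [← EReal.coe_sub, sq, ← EReal.coe_mul, EReal.abs_def, ← sq, abs_sq]

private lemma abs_sq_self' (u : EReal) (r : ℝ) (h : u = r) : ((u - u)^2).abs = 0 := by
  rw [h, ← EReal.coe_sub, sub_self]; simp

private lemma tsum_step' {f g : ℕ → ℝ≥0∞} {n : ℕ} {q : ℝ≥0∞}
    (h : ∀ m, f m = g m + (if m = n then q else 0)) :
    ∑' m, f m = (∑' m, g m) + q := by
  calc ∑' m, f m = ∑' m, (g m + (if m = n then q else 0)) := tsum_congr h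
    _ = (∑' m, g m) + ∑' m, (if m = n then q else 0) := ENNReal.tsum_add
    _ = (∑' m, g m) + q := by rw [tsum_ite_eq]

private lemma coe_ennreal_sub_coe' {x y : ℝ≥0∞} (hx : x ≠ ⊤) (hy : y ≠ ⊤) :
    (x : EReal) - (y : EReal) = ((x.toReal - y.toReal : ℝ) : EReal) := by
  nth_rewrite 1 [← ENNReal.ofReal_toReal hx, ← ENNReal.ofReal_toReal hy]
  rw [EReal.coe_ennreal_ofReal, EReal.coe_ennreal_ofReal,
    max_eq_left ENNReal.toReal_nonneg, max_eq_left ENNReal.toReal_nonneg, ← EReal.coe_sub]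

private lemma stopMin_coe' (τ : Ω → ℝ≥0∞) (t : ℝ≥0) (ω : Ω) :
    ((stopMin τ t ω : ℝ≥0) : ℝ≥0∞) = min (τ ω) (t : ℝ≥0∞) :=
  ENNReal.coe_toNNReal ((min_le_right _ _).trans_lt ENNReal.coe_lt_top).ne

private lemma stopMin_eq_of' {τ τ' : Ω → ℝ≥0∞} {t t' : ℝ≥0} {ω : Ω}
    (h : min (τ ω) (t:ℝ≥0∞) = min (τ' ω) (t':ℝ≥0∞)) : stopMin τ t ω = stopMin τ' t' ω := by
  unfold stopMin; rw [h]

private lemma sqVar_aux (X : ℝ≥0 → Ω → EReal) (σ υ : ℕ → Ω → ℝ≥0∞) (ω : Ω) (t : ℝ≥0)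
    (δ : ℝ) (hδ : 0 < δ)
    (hσm : Monotone fun n => σ n ω) (hσz : σ 0 ω = 0)
    (hυm : Monotone fun n => υ n ω)
    (hfin : {n : ℕ | σ n ω ≤ (t : ℝ≥0∞)}.Finite)
    (hrange : ∀ m, ∃ j, υ j ω = σ m ω)
    (hosc : ∀ n, oscOn X (stopMin (σ n) t ω) (stopMin (σ (n + 1)) t ω) ω ≤ (δ : EReal)) :
    sqVarAlong (fun t' ω' =>
        ((sqVarAlong X σ t' ω' : ℝ≥0∞) : EReal) - ((sqVarAlong X υ t' ω' : ℝ≥0∞) : EReal))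
      υ t ω ≤ ENNReal.ofReal (4 * δ ^ 2) * sqVarAlong X υ t ω := by
  by_cases hV : sqVarAlong X υ t ω = ⊤
  · rw [hV, ENNReal.mul_top (by simp [ENNReal.ofReal_eq_zero]; positivity)]
    exact le_top
  -- abbreviation for the stopped times along υ
  set a : ℕ → ℝ≥0 := fun k => stopMin (υ k) t ω with ha_def
  have hacoe : ∀ k, ((a k : ℝ≥0∞)) = min (υ k ω) (t:ℝ≥0∞) := fun k => stopMin_coe' _ _ _
  have hVt : sqVarAlong X υ t ω = ∑' k, ((X (a (k+1)) ω - X (a k) ω)^2).abs := rfl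
  have htne : ∀ j, ((X (a (j+1)) ω - X (a j) ω)^2).abs ≠ ⊤ := by
    intro j
    refine ne_top_of_le_ne_top hV ?_
    rw [hVt]
    exact ENNReal.le_tsum j
  have hreal : ∀ j, ∃ r : ℝ, X (a j) ω = (r : EReal) := fun j =>
    (real_of_abs_sq_ne_top' (htne j)).2
  choose r hr using hreal
  choose jm hjm using hrange
  -- stopMin computations
  have hming : ∀ (τ' : Ω → ℝ≥0∞) (k : ℕ), (a k : ℝ≥0∞) ≤ τ' ω → stopMin τ' (a k) ω = a k := by
    intro τ' k h
    exact stopMin_eq_of' (by rw [min_eq_right h, hacoe k])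
  have hlower : ∀ i k : ℕ, i ≤ k → stopMin (υ i) (a k) ω = a i := by
    intro i k h
    refine stopMin_eq_of' ?_
    rw [hacoe k, ← min_assoc, min_eq_left (hυm h)]
  have hupper : ∀ i k : ℕ, k ≤ i → stopMin (υ i) (a k) ω = a k := fun i k h =>
    hming _ _ ((hacoe k ▸ min_le_left _ _).trans (hυm h))
  have hlower' : ∀ i k : ℕ, i ≤ k → stopMin (υ i) (a k) ω = a (min i k) := by
    intro i k h; rw [min_eq_left h]; exact hlower i k h
  -- partial sums of [X]^υ
  have hVform : ∀ u : ℝ≥0, sqVarAlong X υ u ω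
      = ∑' j, ((X (stopMin (υ (j+1)) u ω) ω - X (stopMin (υ j) u ω) ω)^2).abs := fun _ => rfl
  have hVk_le : ∀ k, sqVarAlong X υ (a k) ω ≤ sqVarAlong X υ t ω := by
    intro k
    rw [hVt, hVform]
    refine ENNReal.tsum_le_tsum fun j => ?_
    rcases lt_or_ge j k with h | h
    · rw [hlower (j+1) k (by omega), hlower j k (by omega)]
    · rw [hupper (j+1) k (by omega), hupper j k (by omega), abs_sq_self' _ _ (hr k)]
      exact zero_le
  have hVfin : ∀ k, sqVarAlong X υ (a k) ω ≠ ⊤ := fun k => ne_top_of_le_ne_top hV (hVk_le k)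
  have hVstep : ∀ k, sqVarAlong X υ (a (k+1)) ω
      = sqVarAlong X υ (a k) ω + ((X (a (k+1)) ω - X (a k) ω)^2).abs := by
    intro k
    rw [hVform, hVform]
    refine tsum_step' (n := k) fun j => ?_
    rcases lt_trichotomy j k with h | h | h
    · rw [if_neg h.ne, add_zero, hlower (j+1) (k+1) (by omega), hlower j (k+1) (by omega),
        hlower (j+1) k (by omega), hlower j k (by omega)]
    · subst h
      rw [if_pos rfl, hlower (j+1) (j+1) le_rfl, hlower j (j+1) (by omega),
        hupper (j+1) j (by omega), hupper j j le_rfl, abs_sq_self' _ _ (hr j), zero_add]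
    · rw [if_neg h.ne', add_zero, hupper (j+1) (k+1) (by omega), hupper j (k+1) (by omega),
        hupper (j+1) k (by omega), hupper j k (by omega),
        abs_sq_self' _ _ (hr (k+1)), abs_sq_self' _ _ (hr k)]
  -- σ-related computations
  obtain ⟨M, hM⟩ : ∃ M : ℕ, ∀ m, M ≤ m → (t:ℝ≥0∞) < σ m ω := by
    obtain ⟨B, hB⟩ := hfin.bddAbove
    refine ⟨B+1, fun m hm => not_le.mp fun hc => ?_⟩
    have := hB hc
    omega
  have hbig : ∀ m k : ℕ, M ≤ m → stopMin (σ m) (a k) ω = a k := by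
    intro m k hm
    refine hming _ _ ?_
    rw [hacoe k]
    exact (min_le_right _ _).trans (hM m hm).le
  have hσmin : ∀ m k : ℕ, stopMin (σ m) (a k) ω = a (min (jm m) k) := by
    intro m k
    refine stopMin_eq_of' ?_
    rw [← hjm m, hacoe k, ← min_assoc, ← hυm.map_min]
  have hσreal : ∀ m k : ℕ, X (stopMin (σ m) (a k) ω) ω = (r (min (jm m) k) : EReal) := by
    intro m k; rw [hσmin m k]; exact hr _
  have hSform : ∀ u : ℝ≥0, sqVarAlong X σ u ω
      = ∑' m, ((X (stopMin (σ (m+1)) u ω) ω - X (stopMin (σ m) u ω) ω)^2).abs := fun _ => rfl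
  have hSfin : ∀ k, sqVarAlong X σ (a k) ω ≠ ⊤ := by
    intro k
    rw [hSform]
    rw [tsum_eq_sum (s := Finset.range (M+1)) (fun m hm => by
      have hm' : M ≤ m := by simp only [Finset.mem_range] at hm; omega
      rw [hbig (m+1) k (by omega), hbig m k hm', abs_sq_self' _ _ (hr k)])]
    refine (ENNReal.sum_lt_top.mpr fun m _ => ?_).ne
    rw [hσreal (m+1) k, hσreal m k, abs_sq_coe']
    exact ENNReal.ofReal_lt_top
  have hcoe : ∀ x : ℝ, 0 ≤ x → ((ENNReal.ofReal x : ℝ≥0∞) : EReal) = (x : EReal) := by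
    intro x hx; rw [EReal.coe_ennreal_ofReal, max_eq_left hx]
  have key : ∀ k : ℕ,
      (((((sqVarAlong X σ (a (k+1)) ω : ℝ≥0∞) : EReal)
          - ((sqVarAlong X υ (a (k+1)) ω : ℝ≥0∞) : EReal))
        - (((sqVarAlong X σ (a k) ω : ℝ≥0∞) : EReal)
          - ((sqVarAlong X υ (a k) ω : ℝ≥0∞) : EReal)))^2).abs
      ≤ ENNReal.ofReal (4 * δ ^ 2) * ((X (a (k+1)) ω - X (a k) ω)^2).abs := by
    intro k
    by_cases hkk : a (k+1) = a k
    · rw [hkk, coe_ennreal_sub_coe' (hSfin k) (hVfin k), abs_sq_self' _ _ rfl]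
      exact zero_le
    · have hne : min (υ k ω) (t:ℝ≥0∞) ≠ min (υ (k+1) ω) (t:ℝ≥0∞) := by
        intro h
        exact hkk (ENNReal.coe_injective (by rw [hacoe, hacoe, h])).symm
      have hltm : min (υ k ω) (t:ℝ≥0∞) < min (υ (k+1) ω) (t:ℝ≥0∞) :=
        (min_le_min (hυm (Nat.le_succ k)) le_rfl).lt_of_ne hne
      have hkt : υ k ω < (t:ℝ≥0∞) := by
        by_contra hc; push_neg at hc
        rw [min_eq_right hc] at hltm
        exact absurd (min_le_right _ _) (not_le.mpr hltm)
      have hNfin : {n : ℕ | σ n ω ≤ υ k ω}.Finite :=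
        hfin.subset fun n hn => le_trans hn hkt.le
      have hFne : hNfin.toFinset.Nonempty :=
        ⟨0, hNfin.mem_toFinset.mpr (by simp [hσz])⟩
      set n := hNfin.toFinset.max' hFne with hn_def
      have hn1 : σ n ω ≤ υ k ω := hNfin.mem_toFinset.mp (hNfin.toFinset.max'_mem hFne)
      have hn2 : υ k ω < σ (n+1) ω := by
        by_contra hcon; push_neg at hcon
        have := hNfin.toFinset.le_max' (n+1) (hNfin.mem_toFinset.mpr hcon)
        omega
      have hk1 : υ (k+1) ω ≤ σ (n+1) ω := by
        rcases le_or_gt (jm (n+1)) k with hj | hj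
        · exact absurd ((hjm (n+1)) ▸ hυm hj) (not_le.mpr hn2)
        · rw [← hjm (n+1)]; exact hυm hj
      have hc_a : stopMin (σ n) t ω = a (jm n) := stopMin_eq_of' (by rw [hjm n])
      have hccoe : ((a (jm n) : ℝ≥0) : ℝ≥0∞) = min (σ n ω) (t:ℝ≥0∞) := by
        rw [← hc_a]; exact stopMin_coe' _ _ _
      -- decomposition of the σ-variation at the stopped times in [σ_n, σ_{n+1}]
      have hSdec : ∀ w : ℕ, σ n ω ≤ υ w ω → υ w ω ≤ σ (n+1) ω →
          sqVarAlong X σ (a w) ω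
            = sqVarAlong X σ (a (jm n)) ω + ((X (a w) ω - X (a (jm n)) ω)^2).abs := by
        intro w hw1 hw2
        have elow : ∀ i, i ≤ n → stopMin (σ i) (a w) ω = stopMin (σ i) (a (jm n)) ω := by
          intro i hi
          refine stopMin_eq_of' ?_
          rw [hacoe w, hccoe, ← min_assoc, ← min_assoc, min_eq_left ((hσm hi).trans hw1),
            min_eq_left (hσm hi)]
        have ehiw : ∀ i, n+1 ≤ i → stopMin (σ i) (a w) ω = a w := by
          intro i hi
          refine hming _ _ ?_
          rw [hacoe w]
          exact (min_le_left _ _).trans (hw2.trans (hσm hi))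
        have ehic : ∀ i, n ≤ i → stopMin (σ i) (a (jm n)) ω = a (jm n) := by
          intro i hi
          refine hming _ _ ?_
          rw [hccoe]
          exact (min_le_left _ _).trans (hσm hi)
        rw [hSform, hSform]
        refine tsum_step' (n := n) fun m => ?_
        rcases lt_trichotomy m n with hm | hm | hm
        · rw [if_neg hm.ne, add_zero, elow (m+1) hm, elow m hm.le]
        · rw [if_pos hm, hm, ehiw (n+1) le_rfl, elow n le_rfl, ehic n le_rfl,
            ehic (n+1) (Nat.le_succ n), abs_sq_self' _ _ (hr (jm n)), zero_add]
        · rw [if_neg hm.ne', add_zero, ehiw (m+1) (by omega), ehiw m hm,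
            ehic (m+1) (by omega), ehic m hm.le,
            abs_sq_self' _ _ (hr w), abs_sq_self' _ _ (hr (jm n))]
      have hSk := hSdec k hn1 hn2.le
      have hSk1 := hSdec (k+1) (hn1.trans (hυm (Nat.le_succ k))) hk1
      have hScfin : sqVarAlong X σ (a (jm n)) ω ≠ ⊤ := by
        intro h
        exact hSfin k (by rw [hSk, h, top_add])
      -- oscillation bound
      have hosck : |r k - r (jm n)| ≤ δ := by
        have hoscn := hosc n
        have hmemk : a k ∈ Icc (stopMin (σ n) t ω) (stopMin (σ (n+1)) t ω) := by
          constructor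
          · have : ((stopMin (σ n) t ω : ℝ≥0) : ℝ≥0∞) ≤ (a k : ℝ≥0∞) := by
              rw [stopMin_coe', hacoe k]; exact min_le_min hn1 le_rfl
            exact_mod_cast this
          · have : ((a k : ℝ≥0) : ℝ≥0∞) ≤ ((stopMin (σ (n+1)) t ω : ℝ≥0) : ℝ≥0∞) := by
              rw [hacoe k, stopMin_coe']; exact min_le_min hn2.le le_rfl
            exact_mod_cast this
        have hmemc : stopMin (σ n) t ω ∈ Icc (stopMin (σ n) t ω) (stopMin (σ (n+1)) t ω) := by
          refine ⟨le_rfl, ?_⟩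
          have : ((stopMin (σ n) t ω : ℝ≥0) : ℝ≥0∞)
              ≤ ((stopMin (σ (n+1)) t ω : ℝ≥0) : ℝ≥0∞) := by
            rw [stopMin_coe', stopMin_coe']; exact min_le_min (hσm (Nat.le_succ n)) le_rfl
          exact_mod_cast this
        have hub : ∀ u ∈ Icc (stopMin (σ n) t ω) (stopMin (σ (n+1)) t ω),
            ∀ v ∈ Icc (stopMin (σ n) t ω) (stopMin (σ (n+1)) t ω),
            X u ω - X v ω ≤ (δ : EReal) := by
          intro u hu v hv
          simp only [oscOn] at hoscn
          exact le_trans (EReal.sub_le_sub (le_biSup (fun s => X s ω) hu)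
            (biInf_le (fun s => X s ω) hv)) hoscn
        have h3 := hub _ hmemk _ hmemc
        have h4 := hub _ hmemc _ hmemk
        rw [hc_a, hr k, hr (jm n), ← EReal.coe_sub] at h3
        rw [hc_a, hr k, hr (jm n), ← EReal.coe_sub] at h4
        have h3' := EReal.coe_le_coe_iff.mp h3
        have h4' := EReal.coe_le_coe_iff.mp h4
        rw [abs_le]; constructor <;> linarith
      -- numeric values
      have hvstep : ((X (a (k+1)) ω - X (a k) ω)^2).abs
          = ENNReal.ofReal ((r (k+1) - r k)^2) := by
        rw [hr, hr, abs_sq_coe']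
      have hSk_val : sqVarAlong X σ (a k) ω
          = ENNReal.ofReal ((sqVarAlong X σ (a (jm n)) ω).toReal + (r k - r (jm n))^2) := by
        rw [ENNReal.ofReal_add ENNReal.toReal_nonneg (sq_nonneg _),
          ENNReal.ofReal_toReal hScfin, hSk, hr k, hr (jm n), abs_sq_coe']
      have hSk1_val : sqVarAlong X σ (a (k+1)) ω
          = ENNReal.ofReal ((sqVarAlong X σ (a (jm n)) ω).toReal + (r (k+1) - r (jm n))^2) := by
        rw [ENNReal.ofReal_add ENNReal.toReal_nonneg (sq_nonneg _),
          ENNReal.ofReal_toReal hScfin, hSk1, hr (k+1), hr (jm n), abs_sq_coe']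
      have hVk1_val : sqVarAlong X υ (a (k+1)) ω
          = ENNReal.ofReal ((sqVarAlong X υ (a k) ω).toReal + (r (k+1) - r k)^2) := by
        rw [ENNReal.ofReal_add ENNReal.toReal_nonneg (sq_nonneg _),
          ENNReal.ofReal_toReal (hVfin k), hVstep k, hvstep]
      have hVk_val : sqVarAlong X υ (a k) ω
          = ENNReal.ofReal ((sqVarAlong X υ (a k) ω).toReal) :=
        (ENNReal.ofReal_toReal (hVfin k)).symm
      rw [hvstep, hSk1_val, hVk1_val, hSk_val]
      nth_rewrite 2 [hVk_val]
      rw [hcoe ((sqVarAlong X σ (a (jm n)) ω).toReal + (r (k+1) - r (jm n))^2)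
          (add_nonneg ENNReal.toReal_nonneg (sq_nonneg _)),
        hcoe ((sqVarAlong X υ (a k) ω).toReal + (r (k+1) - r k)^2)
          (add_nonneg ENNReal.toReal_nonneg (sq_nonneg _)),
        hcoe ((sqVarAlong X σ (a (jm n)) ω).toReal + (r k - r (jm n))^2)
          (add_nonneg ENNReal.toReal_nonneg (sq_nonneg _)),
        hcoe ((sqVarAlong X υ (a k) ω).toReal) ENNReal.toReal_nonneg,
        ← EReal.coe_sub, ← EReal.coe_sub, abs_sq_coe',
        ← ENNReal.ofReal_mul (by positivity : (0:ℝ) ≤ 4 * δ ^ 2)]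
      refine ENNReal.ofReal_le_ofReal ?_
      have h2 : (r k - r (jm n))^2 ≤ δ^2 :=
        sq_le_sq' (by linarith [abs_le.mp hosck]) (by linarith [abs_le.mp hosck])
      nlinarith [mul_le_mul_of_nonneg_right h2 (sq_nonneg (r (k+1) - r k))]
  -- conclusion
  have hZform : sqVarAlong (fun t' ω' =>
        ((sqVarAlong X σ t' ω' : ℝ≥0∞) : EReal) - ((sqVarAlong X υ t' ω' : ℝ≥0∞) : EReal))
      υ t ω
      = ∑' k, (((((sqVarAlong X σ (a (k+1)) ω : ℝ≥0∞) : EReal)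
          - ((sqVarAlong X υ (a (k+1)) ω : ℝ≥0∞) : EReal))
        - (((sqVarAlong X σ (a k) ω : ℝ≥0∞) : EReal)
          - ((sqVarAlong X υ (a k) ω : ℝ≥0∞) : EReal)))^2).abs := rfl
  rw [hZform, hVt, ← ENNReal.tsum_mul_left]
  exact ENNReal.tsum_le_tsum key




end AuxiliaryForStatement10


/-- if `σ` finely covers the martingale `X` with accuracy `δ` on `E`, `τ` is a
sequence of stopping times with only finitely many `τ_n(ω) ≤ t` on `E`, and `υ` is the
nondecreasing rearrangement of `σ` and `τ`, then
`[[X]^σ − [X]^υ]^υ_t ≤ 4δ²[X]^υ_t` on `E`. -/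
theorem fineCover_sqVar_estimate (M : MartingaleSpace Ω)
    (X : ℝ≥0 → Ω → EReal) (hX : IsMartingale M X) (δ : ℝ) (hδ : 0 < δ)
    (E : Set (ℝ≥0 × Ω)) (σ τ υ : ℕ → Ω → ℝ≥0∞)
    (hσ : FinelyCoversOn M σ X δ E)
    (hτ : ∀ n, M.IsStoppingTime (τ n))
    (hτfin : ∀ p ∈ E, {n : ℕ | τ n p.2 ≤ (p.1 : ℝ≥0∞)}.Finite)
    (hυ : ∀ n, M.IsStoppingTime (υ n))
    (hυmono : ∀ ω, Monotone fun n => υ n ω)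
    (hυrange : ∀ ω,
      range (fun n => υ n ω) = range (fun n => σ n ω) ∪ range (fun n => τ n ω)) :
    ∀ p ∈ E,
      sqVarAlong (fun t ω =>
          ((sqVarAlong X σ t ω : ℝ≥0∞) : EReal) - ((sqVarAlong X υ t ω : ℝ≥0∞) : EReal))
        υ p.1 p.2 ≤ ENNReal.ofReal (4 * δ ^ 2) * sqVarAlong X υ p.1 p.2 := by
  rintro ⟨t, ω⟩ hp
  obtain ⟨hσstop, hσmono, hσz, hσE⟩ := hσ
  obtain ⟨hfin, hosc⟩ := hσE hp
  refine sqVar_aux X σ υ ω t δ hδ (hσmono ω) (hσz ω) (hυmono ω) hfin ?_ hosc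
  intro m
  have : σ m ω ∈ range (fun n => υ n ω) := by
    rw [hυrange ω]; exact Or.inl ⟨m, rfl⟩
  exact this

end ModelFreeBDG
end
end
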